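/- With the optimal discriminator D*(x) = p_data(x)/(p_data(x)+p_g(x)), the GAN value C(G) = ∑_x p_data(x) log D*(x) + ∑_x p_g(x) log(1 - D*(x)) satisfies C(G) = -log 4 + 2 · D_JS(p_data ‖ p_g). -/
import Mathlib


noncomputable def KL {α : Type*} [Fintype α] (p q : α → ℝ) : ℝ :=
  ∑ x, p x * Real.log (p x / q x)

noncomputable def JS {α : Type*} [Fintype α] (p q : α → ℝ) : ℝ :=
  (1/2) * KL p (fun x => (p x + q x) / 2) + (1/2) * KL q (fun x => (p x + q x) / 2)

lemma term_eq (a s : ℝ) (ha : 0 ≤ a) (hs : 0 < s) :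
    a * Real.log (a / (s / 2)) = a * Real.log (a / s) + a * Real.log 2 := by
  rcases eq_or_lt_of_le ha with h | h
  · simp [← h]
  · have : a / (s / 2) = (a / s) * 2 := by field_simp
    rw [this, Real.log_mul (by positivity) (by norm_num), mul_add]

theorem gan_value_eq_js {α : Type*} [Fintype α] (pdata pg : α → ℝ)
    (hp : ∀ x, 0 ≤ pdata x) (hq : ∀ x, 0 ≤ pg x)
    (hps : ∑ x, pdata x = 1) (hqs : ∑ x, pg x = 1)
    (hpos : ∀ x, 0 < pdata x + pg x) :
    (∑ x, pdata x * Real.log (pdata x / (pdata x + pg x))) +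
      (∑ x, pg x * Real.log (pg x / (pdata x + pg x))) =
    -Real.log 4 + 2 * JS pdata pg := by
  have h1 : ∀ x, pdata x * Real.log (pdata x / ((pdata x + pg x) / 2)) =
      pdata x * Real.log (pdata x / (pdata x + pg x)) + pdata x * Real.log 2 :=
    fun x => term_eq _ _ (hp x) (hpos x)
  have h2 : ∀ x, pg x * Real.log (pg x / ((pdata x + pg x) / 2)) =
      pg x * Real.log (pg x / (pdata x + pg x)) + pg x * Real.log 2 :=
    fun x => term_eq _ _ (hq x) (hpos x)
  have h4 : Real.log 4 = 2 * Real.log 2 := by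
    rw [show (4:ℝ) = 2^2 by norm_num, Real.log_pow]; push_cast; ring
  simp only [JS, KL, h1, h2, Finset.sum_add_distrib, ← Finset.sum_mul, hps, hqs, h4]
  ring
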